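/- arXiv:1603.09235 — 5 statements merged into one kernel-verified Lean document; each statement's English description precedes it below -/
import Mathlib

section
/- ((η,β)-Primitive Decomposition, linear-algebra form of Corollary 3.8.) Under the stated bigraded hard Lefschetz hypotheses, for all integers i, j ≥ 0 and all 0 ≤ a ≤ i, 0 ≤ b ≤ j the map η^a ∘ β^b restricts to an injection on the primitive subspace P_{-i}^{-j}, and V is the internal direct sum of the subspaces η^a(β^b(P_{-i}^{-j})) taken over all i, j ≥ 0, 0 ≤ a ≤ i and 0 ≤ b ≤ j. -/
open Function

theorem zerosum_of_iSupIndep {R V : Type*} [Ring R] [AddCommGroup V] [Module R V]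
    {ι : Type*} {p : ι → Submodule R V}
    (hp : iSupIndep p) (S : Finset ι) (v : ι → V)
    (hv : ∀ k ∈ S, v k ∈ p k) (hsum : ∑ k ∈ S, v k = 0) :
    ∀ k ∈ S, v k = 0 := by
  classical
  intro k hk
  have h := Finset.add_sum_erase S v hk
  rw [hsum] at h
  have h1 : v k = -∑ l ∈ S.erase k, v l := eq_neg_of_add_eq_zero_left h
  have h2 : v k ∈ ⨆ (l) (_ : l ≠ k), p l := by
    rw [h1]
    exact neg_mem (Submodule.sum_mem _ fun l hl =>
      Submodule.mem_iSup_of_mem l (Submodule.mem_iSup_of_mem (Finset.ne_of_mem_erase hl)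
        (hv l (Finset.mem_of_mem_erase hl))))
  have h3 := (iSupIndep_def.mp hp k).le_bot (Submodule.mem_inf.mpr ⟨hv k hk, h2⟩)
  simpa using h3

theorem isInternal_of_equiv {V : Type*} [AddCommGroup V] [Module ℝ V]
    {ι ι' : Type*} [DecidableEq ι] [DecidableEq ι']
    (A : ι → Submodule ℝ V) (B : ι' → Submodule ℝ V) (e : ι' ≃ ι)
    (h : ∀ k, A (e k) = B k) (hA : DirectSum.IsInternal A) : DirectSum.IsInternal B := by
  rw [DirectSum.isInternal_submodule_iff_iSupIndep_and_iSup_eq_top] at hA ⊢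
  have hBA : B = A ∘ e := funext fun k => (h k).symm
  constructor
  · rw [hBA]; exact hA.1.comp e.injective
  · rw [← hA.2, ← e.iSup_comp (g := A)]; exact iSup_congr fun k => (h k).symm

theorem lefschetz_decomp {V : Type*} [AddCommGroup V] [Module ℝ V] [FiniteDimensional ℝ V]
    {ι : Type*} [DecidableEq ι] (W : ι → Submodule ℝ V) (hW : DirectSum.IsInternal W)
    (d : ι → ℤ) (σ : ι ≃ ι) (hd : ∀ x, d (σ x) = d x + 2)
    (f : Module.End ℝ V) (hf : ∀ x, (W x).map f ≤ W (σ x))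
    (hHL : ∀ (x : ι) (n : ℕ), d x = -(n : ℤ) →
      ((W x).map (f ^ n) = W (σ^[n] x) ∧ ∀ v ∈ W x, (f ^ n) v = 0 → v = 0)) :
    DirectSum.IsInternal (fun p : {p : ι × ℕ // (p.2 : ℤ) ≤ -(d p.1)} =>
      ((W p.1.1 ⊓ LinearMap.ker (f ^ ((-(d p.1.1)).toNat + 1))).map (f ^ p.1.2))) := by
  classical
  set Pc : {p : ι × ℕ // (p.2 : ℤ) ≤ -(d p.1)} → Submodule ℝ V :=
    fun p => ((W p.1.1 ⊓ LinearMap.ker (f ^ ((-(d p.1.1)).toNat + 1))).map (f ^ p.1.2))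
    with hPcdef
  -- basic iteration facts
  have hd_iter : ∀ (n : ℕ) (x : ι), d (σ^[n] x) = d x + 2 * n := by
    intro n
    induction n with
    | zero => intro x; simp
    | succ n ih =>
      intro x
      rw [Function.iterate_succ_apply', hd, ih]
      push_cast; ring
  have hdsymm : ∀ x, d (σ.symm x) = d x - 2 := by
    intro x
    have := hd (σ.symm x)
    rw [Equiv.apply_symm_apply] at this
    omega
  have hdsymm_iter : ∀ (n : ℕ) (x : ι), d (σ.symm^[n] x) = d x - 2 * n := by
    intro n
    induction n with
    | zero => intro x; simp
    | succ n ih =>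
      intro x
      rw [Function.iterate_succ_apply, ih, hdsymm]
      push_cast; ring
  have hrinv : ∀ (n : ℕ) (x : ι), σ^[n] (σ.symm^[n] x) = x := fun n x =>
    (σ.right_inv.iterate n) x
  have hlinv : ∀ (n : ℕ) (x : ι), σ.symm^[n] (σ^[n] x) = x := fun n x =>
    (σ.left_inv.iterate n) x
  have hmap_iter : ∀ (n : ℕ) (x : ι), (W x).map (f ^ n) ≤ W (σ^[n] x) := by
    intro n
    induction n with
    | zero => intro x; simp [Module.End.one_eq_id, Submodule.map_id]
    | succ n ih =>
      intro x
      calc Submodule.map (f ^ (n+1)) (W x)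
          = Submodule.map f (Submodule.map (f ^ n) (W x)) := by
            rw [pow_succ', Module.End.mul_eq_comp, Submodule.map_comp]
        _ ≤ Submodule.map f (W (σ^[n] x)) := Submodule.map_mono (ih x)
        _ ≤ W (σ (σ^[n] x)) := hf _
        _ = W (σ^[n+1] x) := by rw [Function.iterate_succ_apply']
  have hmem_iter : ∀ (n : ℕ) (x : ι) (v : V), v ∈ W x → (f ^ n) v ∈ W (σ^[n] x) :=
    fun n x v hv => hmap_iter n x ⟨v, hv, rfl⟩
  have hmapsucc : ∀ (a : ℕ) (Q : Submodule ℝ V), (Q.map (f ^ a)).map f = Q.map (f ^ (a + 1)) := by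
    intro a Q
    rw [pow_succ', Module.End.mul_eq_comp, Submodule.map_comp]
  have hpowapp : ∀ (k : ℕ) (u : V), (f ^ (k + 1)) u = (f ^ k) (f u) := by
    intro k u
    rw [pow_succ, Module.End.mul_apply]
  -- lower bound on nonzero degrees
  obtain ⟨M, hM⟩ : ∃ M : ℤ, ∀ x, d x < M → W x = ⊥ := by
    have hind := hW.submodule_iSupIndep
    have hfin : {x : ι | W x ≠ ⊥}.Finite := by
      rw [← Set.finite_coe_iff]
      have hne : ∀ x : {x : ι | W x ≠ ⊥}, ∃ v, v ∈ W x.1 ∧ v ≠ 0 := fun x =>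
        Submodule.exists_mem_ne_zero_of_ne_bot x.2
      choose v hv hv0 using hne
      exact (iSupIndep.linearIndependent _ (hind.comp Subtype.val_injective) hv hv0).finite
    rcases (hfin.image d).bddBelow with ⟨M, hMlb⟩
    refine ⟨M, fun x hx => ?_⟩
    by_contra hne
    have := hMlb (Set.mem_image_of_mem d (show x ∈ {x : ι | W x ≠ ⊥} from hne))
    omega
  set SS : Submodule ℝ V := ⨆ p, Pc p with hSSdef
  -- f maps SS into itself
  have hfP : ∀ p, (Pc p).map f ≤ SS := by
    rintro ⟨⟨x, a⟩, hpa⟩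
    have heq : (Pc ⟨(x, a), hpa⟩).map f
        = (W x ⊓ LinearMap.ker (f ^ ((-(d x)).toNat + 1))).map (f ^ (a + 1)) :=
      hmapsucc a _
    by_cases hc : ((a + 1 : ℕ) : ℤ) ≤ -(d x)
    · rw [heq]
      exact le_iSup Pc ⟨(x, a + 1), hc⟩
    · have hpa' : (a : ℤ) ≤ -(d x) := hpa
      have ha : (-(d x)).toNat = a := by
        push_cast at hc
        omega
      rw [heq]
      rintro v ⟨u, hu, rfl⟩
      have hu2 : (f ^ ((-(d x)).toNat + 1)) u = 0 := hu.2
      rw [ha] at hu2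
      rw [hu2]
      exact Submodule.zero_mem _
  have hfS : SS.map f ≤ SS := by
    rw [hSSdef, Submodule.map_iSup]
    exact iSup_le hfP
  have hfSpow : ∀ t : ℕ, SS.map (f ^ t) ≤ SS := by
    intro t
    induction t with
    | zero => simp [Module.End.one_eq_id, Submodule.map_id]
    | succ t ih =>
      rw [← hmapsucc t SS]
      exact le_trans (Submodule.map_mono ih) hfS
  -- spanning
  have span_le : ∀ t : ℕ, ∀ y : ι, d y ≤ 0 → d y < M + 2 * t → W y ≤ SS := by
    intro t
    induction t with
    | zero =>
      intro y _ hy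
      rw [hM y (by omega)]
      exact bot_le
    | succ t ih =>
      intro y hy0 hyt
      set n : ℕ := (-(d y)).toNat with hn
      intro v hv
      have h1 : (f ^ (n + 1)) v ∈ W (σ^[n+1] y) := hmem_iter (n + 1) y v hv
      have hd2 : d (σ.symm y) = -((n + 2 : ℕ) : ℤ) := by
        rw [hdsymm]
        push_cast
        omega
      have hsurj := (hHL (σ.symm y) (n + 2) hd2).1
      have hit : σ^[n+2] (σ.symm y) = σ^[n+1] y := by
        rw [Function.iterate_succ_apply, Equiv.apply_symm_apply]
      rw [hit] at hsurj
      rw [← hsurj] at h1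
      obtain ⟨w, hw, hweq⟩ := h1
      have hfw : f w ∈ W y := by
        have := hf (σ.symm y) ⟨w, hw, rfl⟩
        rwa [Equiv.apply_symm_apply] at this
      have hker : v - f w ∈ LinearMap.ker (f ^ (n + 1)) := by
        rw [LinearMap.mem_ker, map_sub]
        have h2 : (f ^ (n + 1)) (f w) = (f ^ (n + 2)) w := (hpowapp (n + 1) w).symm
        rw [h2, hweq, sub_self]
      have hc0 : ((0 : ℕ) : ℤ) ≤ -(d y) := by push_cast; omega
      have hvw : v - f w ∈ SS := by
        have hmem : v - f w ∈ Pc ⟨(y, 0), hc0⟩ := by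
          show v - f w ∈ (W y ⊓ LinearMap.ker (f ^ ((-(d y)).toNat + 1))).map (f ^ 0)
          rw [pow_zero]
          simpa using Submodule.mem_inf.mpr ⟨sub_mem hv hfw, hker⟩
        exact le_iSup Pc ⟨(y, 0), hc0⟩ hmem
      have hfwS : f w ∈ SS := by
        have hwS : w ∈ SS := ih (σ.symm y) (by rw [hdsymm]; omega) (by rw [hdsymm]; omega) hw
        exact hfS ⟨w, hwS, rfl⟩
      have hveq : v = (v - f w) + f w := (sub_add_cancel v (f w)).symm
      rw [hveq]
      exact add_mem hvw hfwS
  have span_le' : ∀ y : ι, d y ≤ 0 → W y ≤ SS := fun y hy =>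
    span_le ((d y - M).toNat + 1) y hy (by omega)
  have span_all : ∀ y, W y ≤ SS := by
    intro y
    rcases le_or_gt (d y) 0 with hy | hy
    · exact span_le' y hy
    · set m : ℕ := (d y).toNat with hm
      have hdx : d (σ.symm^[m] y) = -(m : ℤ) := by rw [hdsymm_iter]; omega
      have hsurj := (hHL _ m hdx).1
      rw [hrinv m y] at hsurj
      rw [← hsurj]
      calc (W (σ.symm^[m] y)).map (f ^ m) ≤ SS.map (f ^ m) :=
            Submodule.map_mono (span_le' _ (by omega))
        _ ≤ SS := hfSpow m
  have htop : SS = ⊤ := by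
    rw [eq_top_iff, ← hW.submodule_iSup_eq_top]
    exact iSup_le span_all
  -- key degree facts for pieces
  have key_d : ∀ (p : {p : ι × ℕ // (p.2 : ℤ) ≤ -(d p.1)}),
      d p.1.1 = d (σ^[p.1.2] p.1.1) - 2 * p.1.2 := by
    intro p
    rw [hd_iter]
    ring
  have xdet : ∀ (p : {p : ι × ℕ // (p.2 : ℤ) ≤ -(d p.1)}),
      p.1.1 = σ.symm^[p.1.2] (σ^[p.1.2] p.1.1) := fun p => (hlinv p.1.2 p.1.1).symm
  -- column-wise zero-sum property
  have COL : ∀ (F : Finset {p : ι × ℕ // (p.2 : ℤ) ≤ -(d p.1)}), ∀ (y : ι)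
      (u : {p : ι × ℕ // (p.2 : ℤ) ≤ -(d p.1)} → V),
      (∀ l ∈ F, σ^[l.1.2] l.1.1 = y) → (∀ l ∈ F, u l ∈ Pc l) → ∑ l ∈ F, u l = 0 →
      ∀ l ∈ F, u l = 0 := by
    intro F
    induction F using Finset.strongInduction with
    | _ F ih =>
      intro y u hyF huF hsum
      rcases F.eq_empty_or_nonempty with rfl | hne
      · simp
      · have hAne : (F.image fun l => l.1.2).Nonempty := hne.image _
        set A0 : ℕ := (F.image fun l => l.1.2).max' hAne with hA0
        obtain ⟨l0, hl0F, hl0a⟩ : ∃ l0 ∈ F, l0.1.2 = A0 := by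
          obtain ⟨l0, h1, h2⟩ := Finset.mem_image.mp ((F.image fun l => l.1.2).max'_mem hAne)
          exact ⟨l0, h1, h2⟩
        have hamax : ∀ l ∈ F, l.1.2 ≤ A0 := fun l hl =>
          Finset.le_max' (F.image fun l => l.1.2) l.1.2
            (Finset.mem_image_of_mem (fun l => l.1.2) hl)
        have huniq : ∀ l ∈ F, l.1.2 = A0 → l = l0 := by
          intro l hl hla
          have h1 : l.1.1 = l0.1.1 := by
            rw [xdet l, xdet l0, hyF l hl, hyF l0 hl0F, hla, hl0a]
          apply Subtype.ext
          apply Prod.ext h1 (hla.trans hl0a.symm)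
        set m : ℤ := d y with hm
        have hmle : ∀ l ∈ F, m ≤ (l.1.2 : ℤ) ∧ d l.1.1 = m - 2 * (l.1.2 : ℤ) := by
          intro l hl
          have h := key_d l
          rw [hyF l hl] at h
          have h2 : (l.1.2 : ℤ) ≤ -(d l.1.1) := l.2
          omega
        have hmA0 : m ≤ (A0 : ℤ) := by
          have h := (hmle l0 hl0F).1
          rw [hl0a] at h
          exact h
        set K : ℕ := ((A0 : ℤ) - m).toNat with hK
        have hKval : (K : ℤ) = (A0 : ℤ) - m := by omega
        have hkill : ∀ l ∈ F, l ≠ l0 → (f ^ K) (u l) = 0 := by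
          intro l hl hne0
          have hlt : l.1.2 < A0 :=
            lt_of_le_of_ne (hamax l hl) (fun h => hne0 (huniq l hl h))
          obtain ⟨q, hq, hqe⟩ := huF l hl
          have hdl := (hmle l hl).2
          have hqker : (f ^ ((-(d l.1.1)).toNat + 1)) q = 0 := hq.2
          have hexp : K + l.1.2 = (K + l.1.2 - ((-(d l.1.1)).toNat + 1)) + ((-(d l.1.1)).toNat + 1) := by
            omega
          calc (f ^ K) (u l) = (f ^ (K + l.1.2)) q := by
                rw [← hqe, ← Module.End.mul_apply, ← pow_add]
            _ = 0 := by
                rw [hexp, pow_add, Module.End.mul_apply, hqker, map_zero]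
        have hl0z : (f ^ K) (u l0) = 0 := by
          have h0 : (f ^ K) (∑ l ∈ F, u l) = 0 := by rw [hsum, map_zero]
          rw [map_sum] at h0
          rwa [Finset.sum_eq_single_of_mem l0 hl0F (fun l hl hne0 => hkill l hl hne0)] at h0
        obtain ⟨q0, hq0, hq0e⟩ := huF l0 hl0F
        have hdl0 : d l0.1.1 = m - 2 * (A0 : ℤ) := by
          have h := (hmle l0 hl0F).2
          rw [hl0a] at h
          exact h
        have hKA : K + l0.1.2 = (-(d l0.1.1)).toNat := by
          have := hl0a
          omega
        have hq0z : (f ^ ((-(d l0.1.1)).toNat)) q0 = 0 := by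
          rw [← hKA, pow_add, Module.End.mul_apply, hq0e, hl0z]
        have hq00 : q0 = 0 :=
          (hHL l0.1.1 ((-(d l0.1.1)).toNat) (by omega)).2 q0 hq0.1 hq0z
        have hul0 : u l0 = 0 := by rw [← hq0e, hq00, map_zero]
        have hrec := ih (F.erase l0) (Finset.erase_ssubset hl0F) y u
          (fun l hl => hyF l (Finset.mem_of_mem_erase hl))
          (fun l hl => huF l (Finset.mem_of_mem_erase hl))
          (by rw [Finset.sum_erase_eq_sub hl0F, hsum, hul0, sub_zero])
        intro l hl
        rcases eq_or_ne l l0 with rfl | hne0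
        · exact hul0
        · exact hrec l (Finset.mem_erase.mpr ⟨hne0, hl⟩)
  -- global zero-sum property
  have ZS : ∀ (S : Finset {p : ι × ℕ // (p.2 : ℤ) ≤ -(d p.1)})
      (u : {p : ι × ℕ // (p.2 : ℤ) ≤ -(d p.1)} → V),
      (∀ l ∈ S, u l ∈ Pc l) → ∑ l ∈ S, u l = 0 → ∀ l ∈ S, u l = 0 := by
    intro S u huS hsum
    set yf : {p : ι × ℕ // (p.2 : ℤ) ≤ -(d p.1)} → ι := fun p => σ^[p.1.2] p.1.1 with hyfdef
    have hPcW : ∀ l, Pc l ≤ W (yf l) := by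
      rintro ⟨⟨x, a⟩, hpa⟩
      exact le_trans (Submodule.map_mono inf_le_left) (hmap_iter a x)
    have hmaps : ∀ l ∈ S, yf l ∈ S.image yf := fun l hl => Finset.mem_image_of_mem yf hl
    have hfibsum : ∑ y ∈ S.image yf, ∑ l ∈ S.filter (fun l => yf l = y), u l = 0 := by
      rw [Finset.sum_fiberwise_of_maps_to hmaps]
      exact hsum
    have hfib0 := zerosum_of_iSupIndep hW.submodule_iSupIndep (S.image yf)
      (fun y => ∑ l ∈ S.filter (fun l => yf l = y), u l)
      (fun y _ => Submodule.sum_mem _ (fun l hl => by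
        rw [← (Finset.mem_filter.mp hl).2]
        exact hPcW l (huS l (Finset.mem_filter.mp hl).1))) hfibsum
    intro l hl
    exact COL (S.filter (fun l' => yf l' = yf l)) (yf l) u
      (fun l' hl' => (Finset.mem_filter.mp hl').2)
      (fun l' hl' => huS l' (Finset.mem_filter.mp hl').1)
      (hfib0 (yf l) (hmaps l hl)) l (Finset.mem_filter.mpr ⟨hl, rfl⟩)
  -- independence
  have hindep : iSupIndep Pc := by
    rw [iSupIndep_def]
    intro k
    rw [disjoint_iff, eq_bot_iff]
    intro v hvmem
    obtain ⟨hv1, hv2⟩ := Submodule.mem_inf.mp hvmem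
    rw [iSup_subtype'] at hv2
    rw [Submodule.mem_iSup_iff_exists_finsupp] at hv2
    obtain ⟨g, hg, hgsum⟩ := hv2
    set T : Finset {p : ι × ℕ // (p.2 : ℤ) ≤ -(d p.1)} := g.support.image Subtype.val with hT
    have hkT : k ∉ T := by
      rw [hT]
      intro hmem
      obtain ⟨i, _, hik⟩ := Finset.mem_image.mp hmem
      exact i.2 hik
    set u : {p : ι × ℕ // (p.2 : ℤ) ≤ -(d p.1)} → V :=
      fun l => if h : l = k then -v else g ⟨l, h⟩ with hu
    have humem : ∀ l ∈ insert k T, u l ∈ Pc l := by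
      intro l hl
      simp only [hu]
      by_cases h : l = k
      · rw [dif_pos h, h]
        exact neg_mem hv1
      · rw [dif_neg h]
        exact hg ⟨l, h⟩
    have hsum0 : ∑ l ∈ insert k T, u l = 0 := by
      rw [Finset.sum_insert hkT]
      have h1 : u k = -v := by simp only [hu]; simp
      have h2 : ∑ l ∈ T, u l = v := by
        rw [hT, Finset.sum_image (fun a _ b _ h => Subtype.val_injective h)]
        rw [← hgsum, Finsupp.sum]
        apply Finset.sum_congr rfl
        intro i _
        simp only [hu]
        rw [dif_neg i.2, Subtype.coe_eta]
      rw [h1, h2, neg_add_cancel]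
    have := ZS (insert k T) u humem hsum0 k (Finset.mem_insert_self k T)
    simp only [hu, dif_pos] at this
    rw [Submodule.mem_bot]
    exact neg_eq_zero.mp this
  exact DirectSum.isInternal_submodule_of_iSupIndep_of_iSup_eq_top hindep htop

def pdShift1 : (ℤ × ℤ) ≃ (ℤ × ℤ) where
  toFun x := (x.1 + 2, x.2 + 2)
  invFun x := (x.1 - 2, x.2 - 2)
  left_inv x := by simp
  right_inv x := by simp

abbrev PDIdx1 : Type := {p : (ℤ × ℤ) × ℕ // (p.2 : ℤ) ≤ -(p.1.1)}

def pdShift2 : PDIdx1 ≃ PDIdx1 where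
  toFun p := ⟨((p.1.1.1, p.1.1.2 + 2), p.1.2), p.2⟩
  invFun p := ⟨((p.1.1.1, p.1.1.2 - 2), p.1.2), p.2⟩
  left_inv p := by
    obtain ⟨⟨⟨x1, x2⟩, a⟩, hp⟩ := p
    apply Subtype.ext
    simp
  right_inv p := by
    obtain ⟨⟨⟨x1, x2⟩, a⟩, hp⟩ := p
    apply Subtype.ext
    simp

/-- **(η,β)-Primitive Decomposition** (linear-algebra form of Corollary 3.8).

Let `V` be a finite-dimensional real vector space with a bigrading
`V = ⊕ V_i^j`, and let `η, β` be commuting endomorphisms of bidegrees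
`(2,2)` and `(0,2)` respectively, satisfying relative hard Lefschetz
(`η^i : V_{-i}^j ≃ V_i^{j+2i}`) and hard Lefschetz for perverse cohomology
(`β^j : V_i^{i-j} ≃ V_i^{i+j}`).  With the primitive subspaces
`P_{-i}^{-j} = {v ∈ V_{-i}^{-i-j} | η^{i+1} v = 0, β^{j+1} v = 0}`,
for all `0 ≤ a ≤ i` and `0 ≤ b ≤ j` the map `η^a ∘ β^b` is injective
on `P_{-i}^{-j}`, and `V` is the internal direct sum of the subspaces
`η^a(β^b(P_{-i}^{-j}))`. -/
theorem primitive_decomposition_eta_beta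
    (V : Type*) [AddCommGroup V] [Module ℝ V] [FiniteDimensional ℝ V]
    (Vg : ℤ × ℤ → Submodule ℝ V)
    (hgrading : DirectSum.IsInternal Vg)
    (η β : Module.End ℝ V)
    (hcomm : Commute η β)
    (hη : ∀ i j : ℤ, (Vg (i, j)).map η ≤ Vg (i + 2, j + 2))
    (hβ : ∀ i j : ℤ, (Vg (i, j)).map β ≤ Vg (i, j + 2))
    (hRHL : ∀ (i : ℕ) (j : ℤ),
      (Vg (-(i : ℤ), j)).map (η ^ i) = Vg ((i : ℤ), j + 2 * i) ∧
      ∀ v ∈ Vg (-(i : ℤ), j), (η ^ i) v = 0 → v = 0)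
    (hHLP : ∀ (i : ℤ) (j : ℕ),
      (Vg (i, i - j)).map (β ^ j) = Vg (i, i + j) ∧
      ∀ v ∈ Vg (i, i - j), (β ^ j) v = 0 → v = 0)
    (P : ℕ → ℕ → Submodule ℝ V)
    (hP : ∀ i j : ℕ, P i j =
      Vg (-(i : ℤ), -(i : ℤ) - j) ⊓ LinearMap.ker (η ^ (i + 1)) ⊓
        LinearMap.ker (β ^ (j + 1))) :
    (∀ i j a b : ℕ, a ≤ i → b ≤ j →
      ∀ v ∈ P i j, (η ^ a) ((β ^ b) v) = 0 → v = 0) ∧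
    DirectSum.IsInternal
      (fun q : {x : (ℕ × ℕ) × ℕ × ℕ // x.2.1 ≤ x.1.1 ∧ x.2.2 ≤ x.1.2} =>
        (P q.1.1.1 q.1.1.2).map (η ^ q.1.2.1 * β ^ q.1.2.2)) := by
  classical
  -- membership helpers
  have hηmem : ∀ (a : ℕ) (i' j' : ℤ) (w : V), w ∈ Vg (i', j') →
      (η ^ a) w ∈ Vg (i' + 2 * a, j' + 2 * a) := by
    intro a
    induction a with
    | zero => intro i' j' w hw; simpa using hw
    | succ a ih =>
      intro i' j' w hw
      have h1 := ih i' j' w hw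
      have h2 : η ((η ^ a) w) ∈ Vg (i' + 2 * a + 2, j' + 2 * a + 2) :=
        hη (i' + 2 * a) (j' + 2 * a) ⟨_, h1, rfl⟩
      have h3 : (η ^ (a + 1)) w = η ((η ^ a) w) := by
        rw [pow_succ', Module.End.mul_apply]
      rw [h3]
      convert h2 using 2 <;> push_cast <;> ring
  have hβmem : ∀ (b : ℕ) (i' j' : ℤ) (w : V), w ∈ Vg (i', j') →
      (β ^ b) w ∈ Vg (i', j' + 2 * b) := by
    intro b
    induction b with
    | zero => intro i' j' w hw; simpa using hw
    | succ b ih =>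
      intro i' j' w hw
      have h1 := ih i' j' w hw
      have h2 : β ((β ^ b) w) ∈ Vg (i', j' + 2 * b + 2) :=
        hβ i' (j' + 2 * b) ⟨_, h1, rfl⟩
      have h3 : (β ^ (b + 1)) w = β ((β ^ b) w) := by
        rw [pow_succ', Module.End.mul_apply]
      rw [h3]
      convert h2 using 2 <;> push_cast <;> ring
  have hηinj : ∀ (a i' : ℕ), a ≤ i' → ∀ (j' : ℤ) (w : V),
      w ∈ Vg (-(i' : ℤ), j') → (η ^ a) w = 0 → w = 0 := by
    intro a i' ha j' w hw hz
    apply (hRHL i' j').2 w hw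
    have h : i' = (i' - a) + a := by omega
    rw [h, pow_add, Module.End.mul_apply, hz, map_zero]
  have hβinj : ∀ (b j' : ℕ), b ≤ j' → ∀ (i' : ℤ) (w : V),
      w ∈ Vg (i', i' - (j' : ℤ)) → (β ^ b) w = 0 → w = 0 := by
    intro b j' hb i' w hw hz
    apply (hHLP i' j').2 w hw
    have h : j' = (j' - b) + b := by omega
    rw [h, pow_add, Module.End.mul_apply, hz, map_zero]
  constructor
  · -- injectivity of η^a ∘ β^b on P i j
    intro i j a b hai hbj v hv hz
    rw [hP] at hv
    obtain ⟨⟨hvg, _⟩, _⟩ := hv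
    have h1 : (β ^ b) v ∈ Vg (-(i : ℤ), (-(i : ℤ) - j) + 2 * b) := hβmem b _ _ v hvg
    have h2 : (β ^ b) v = 0 := hηinj a i hai _ _ h1 hz
    exact hβinj b j hbj (-(i : ℤ)) v hvg h2
  · -- the direct sum decomposition
    -- swap lemma for maps
    have hmapswap : ∀ (a : ℕ) (g : Module.End ℝ V), g * (η ^ a) = (η ^ a) * g →
        ∀ Q : Submodule ℝ V, (Q.map (η ^ a)).map g = (Q.map g).map (η ^ a) := by
      intro a g hg Q
      rw [← Submodule.map_comp, ← Submodule.map_comp, ← Module.End.mul_eq_comp,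
        ← Module.End.mul_eq_comp, hg]
    -- iterate formula for pdShift1
    have hσ1iter : ∀ (n : ℕ) (x : ℤ × ℤ), pdShift1^[n] x = (x.1 + 2 * n, x.2 + 2 * n) := by
      intro n
      induction n with
      | zero => intro x; simp
      | succ n ih =>
        intro x
        rw [Function.iterate_succ_apply', ih]
        show ((x.1 + 2 * (n : ℤ)) + 2, (x.2 + 2 * (n : ℤ)) + 2) = _
        rw [Prod.mk.injEq]
        constructor <;> push_cast <;> ring
    -- first application : η-Lefschetz decomposition
    have hHL₁ : ∀ (x : ℤ × ℤ) (n : ℕ), Prod.fst x = -(n : ℤ) →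
        ((Vg x).map (η ^ n) = Vg (pdShift1^[n] x) ∧
          ∀ v ∈ Vg x, (η ^ n) v = 0 → v = 0) := by
      rintro ⟨x1, x2⟩ n hdn
      replace hdn : x1 = -(n : ℤ) := hdn
      subst hdn
      constructor
      · have h := (hRHL n x2).1
        rw [hσ1iter n]
        have he1 : (-(n : ℤ), x2).1 + 2 * (n : ℤ) = (n : ℤ) := by
          show -(n : ℤ) + 2 * (n : ℤ) = (n : ℤ); ring
        have he2 : (-(n : ℤ), x2).2 + 2 * (n : ℤ) = x2 + 2 * (n : ℤ) := rfl
        rw [he1, he2]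
        exact h
      · exact (hRHL n x2).2
    have happ1 : DirectSum.IsInternal (fun p : PDIdx1 =>
        (Vg p.1.1 ⊓ LinearMap.ker (η ^ ((-(p.1.1.1)).toNat + 1))).map (η ^ p.1.2)) :=
      lefschetz_decomp Vg hgrading Prod.fst pdShift1 (fun x => rfl) η
        (fun x => hη x.1 x.2) hHL₁
    -- iterate formula for pdShift2 (on values)
    have hσ2iter : ∀ (n : ℕ) (p : PDIdx1),
        (pdShift2^[n] p).1 = ((p.1.1.1, p.1.1.2 + 2 * n), p.1.2) := by
      intro n
      induction n with
      | zero => intro p; simp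
      | succ n ih =>
        intro p
        rw [Function.iterate_succ_apply']
        show (((pdShift2^[n] p).1.1.1, (pdShift2^[n] p).1.1.2 + 2), (pdShift2^[n] p).1.2) = _
        rw [ih]
        show ((p.1.1.1, p.1.1.2 + 2 * (n : ℤ) + 2), p.1.2) = _
        rw [Prod.mk.injEq, Prod.mk.injEq]
        refine ⟨⟨rfl, ?_⟩, rfl⟩
        push_cast
        ring
    -- β maps pieces to pieces
    have hf₂ : ∀ p : PDIdx1,
        ((Vg p.1.1 ⊓ LinearMap.ker (η ^ ((-(p.1.1.1)).toNat + 1))).map (η ^ p.1.2)).map β ≤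
        (Vg (pdShift2 p).1.1 ⊓
          LinearMap.ker (η ^ ((-((pdShift2 p).1.1.1)).toNat + 1))).map (η ^ (pdShift2 p).1.2) := by
      rintro ⟨⟨⟨x1, x2⟩, a⟩, hpa⟩
      show ((Vg (x1, x2) ⊓ LinearMap.ker (η ^ ((-x1).toNat + 1))).map (η ^ a)).map β ≤
        (Vg (x1, x2 + 2) ⊓ LinearMap.ker (η ^ ((-x1).toNat + 1))).map (η ^ a)
      rw [hmapswap a β (hcomm.pow_left a).symm.eq]
      apply Submodule.map_mono
      rintro v ⟨u, hu, rfl⟩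
      obtain ⟨hu1, hu2⟩ := Submodule.mem_inf.mp hu
      refine Submodule.mem_inf.mpr ⟨hβ x1 x2 ⟨u, hu1, rfl⟩, ?_⟩
      have hc : (η ^ ((-x1).toNat + 1)) (β u) = β ((η ^ ((-x1).toNat + 1)) u) := by
        rw [← Module.End.mul_apply, (hcomm.pow_left ((-x1).toNat + 1)).eq, Module.End.mul_apply]
      rw [LinearMap.mem_ker, hc, LinearMap.mem_ker.mp hu2, map_zero]
    -- hard Lefschetz for β on the η-pieces
    have hHL₂ : ∀ (p : PDIdx1) (n : ℕ), (p.1.1.2 - p.1.1.1) = -(n : ℤ) →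
        (((Vg p.1.1 ⊓ LinearMap.ker (η ^ ((-(p.1.1.1)).toNat + 1))).map (η ^ p.1.2)).map (β ^ n)
          = (Vg (pdShift2^[n] p).1.1 ⊓
              LinearMap.ker (η ^ ((-((pdShift2^[n] p).1.1.1)).toNat + 1))).map
              (η ^ (pdShift2^[n] p).1.2) ∧
        ∀ v ∈ (Vg p.1.1 ⊓ LinearMap.ker (η ^ ((-(p.1.1.1)).toNat + 1))).map (η ^ p.1.2),
          (β ^ n) v = 0 → v = 0) := by
      rintro ⟨⟨⟨x1, x2⟩, a⟩, hpa⟩ n hdn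
      replace hdn : x2 - x1 = -(n : ℤ) := hdn
      have hpa' : (a : ℤ) ≤ -x1 := hpa
      have hNval : (((-x1).toNat : ℤ)) = -x1 := by omega
      have haN : a ≤ (-x1).toNat := by omega
      have hx1N : x1 = -(((-x1).toNat : ℕ) : ℤ) := by omega
      have hx2 : x2 = x1 - (n : ℤ) := by omega
      -- the key middle identity
      have hdag : ((Vg (x1, x2) ⊓ LinearMap.ker (η ^ ((-x1).toNat + 1))).map (β ^ n))
          = Vg (x1, x2 + 2 * n) ⊓ LinearMap.ker (η ^ ((-x1).toNat + 1)) := by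
        apply le_antisymm
        · rintro v ⟨u, hu, rfl⟩
          obtain ⟨hu1, hu2⟩ := Submodule.mem_inf.mp hu
          refine Submodule.mem_inf.mpr ⟨hβmem n x1 x2 u hu1, ?_⟩
          have hc : (η ^ ((-x1).toNat + 1)) ((β ^ n) u) = (β ^ n) ((η ^ ((-x1).toNat + 1)) u) := by
            rw [← Module.End.mul_apply, (hcomm.pow_pow ((-x1).toNat + 1) n).eq,
              Module.End.mul_apply]
          rw [LinearMap.mem_ker, hc, LinearMap.mem_ker.mp hu2, map_zero]
        · rintro v hv
          obtain ⟨hv1, hv2⟩ := Submodule.mem_inf.mp hv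
          have hx2' : x2 + 2 * (n : ℤ) = x1 + n := by omega
          have hsurj := (hHLP x1 n).1
          have hv1' : v ∈ Vg (x1, x1 + (n : ℤ)) := by rw [← hx2']; exact hv1
          rw [← hsurj] at hv1'
          obtain ⟨q, hq, hqe⟩ := hv1'
          have hqη : (η ^ ((-x1).toNat + 1)) q = 0 := by
            have hmem := hηmem ((-x1).toNat + 1) x1 (x1 - n) q hq
            have hβη : (β ^ n) ((η ^ ((-x1).toNat + 1)) q)
                = (η ^ ((-x1).toNat + 1)) ((β ^ n) q) := by
              rw [← Module.End.mul_apply, ← (hcomm.pow_pow ((-x1).toNat + 1) n).eq,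
                Module.End.mul_apply]
            have hz : (β ^ n) ((η ^ ((-x1).toNat + 1)) q) = 0 := by
              rw [hβη, hqe]
              exact LinearMap.mem_ker.mp hv2
            have hco : (x1 + 2 * (((-x1).toNat + 1 : ℕ) : ℤ),
                (x1 - n) + 2 * (((-x1).toNat + 1 : ℕ) : ℤ))
                = ((((-x1).toNat : ℤ) + 2), ((((-x1).toNat : ℤ) + 2) - n)) := by
              rw [Prod.mk.injEq]
              constructor <;> push_cast <;> omega
            rw [hco] at hmem
            exact (hHLP (((-x1).toNat : ℤ) + 2) n).2 _ hmem hz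
          refine ⟨q, Submodule.mem_inf.mpr ⟨?_, LinearMap.mem_ker.mpr hqη⟩, hqe⟩
          rw [hx2]
          exact hq
      constructor
      · show ((Vg (x1, x2) ⊓ LinearMap.ker (η ^ ((-x1).toNat + 1))).map (η ^ a)).map (β ^ n) = _
        rw [hmapswap a (β ^ n) (hcomm.pow_pow a n).symm.eq, hdag]
        have hval := hσ2iter n ⟨((x1, x2), a), hpa⟩
        show _ = (Vg (pdShift2^[n] ⟨((x1, x2), a), hpa⟩).1.1 ⊓
            LinearMap.ker (η ^ ((-((pdShift2^[n] ⟨((x1, x2), a), hpa⟩).1.1.1)).toNat + 1))).map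
            (η ^ (pdShift2^[n] ⟨((x1, x2), a), hpa⟩).1.2)
        rw [hval]
      · rintro v ⟨q, hqmem, rfl⟩ hz
        obtain ⟨hq1, hq2⟩ := Submodule.mem_inf.mp hqmem
        have h1 : (η ^ a) ((β ^ n) q) = 0 := by
          rw [← Module.End.mul_apply, (hcomm.pow_pow a n).eq, Module.End.mul_apply]
          exact hz
        have h2 : (β ^ n) q ∈ Vg (x1, x2 + 2 * n) := hβmem n x1 x2 q hq1
        rw [hx1N] at h2
        have h3 : (β ^ n) q = 0 := hηinj a (-x1).toNat haN _ _ h2 h1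
        have h4 : q = 0 := by
          apply (hHLP x1 n).2 q ?_ h3
          rw [← hx2]
          exact hq1
        rw [h4, map_zero]
    have happ2 := lefschetz_decomp (ι := PDIdx1)
      (fun p : PDIdx1 =>
        (Vg p.1.1 ⊓ LinearMap.ker (η ^ ((-(p.1.1.1)).toNat + 1))).map (η ^ p.1.2))
      happ1 (fun p => p.1.1.2 - p.1.1.1) pdShift2
      (fun p => by show p.1.1.2 + 2 - p.1.1.1 = p.1.1.2 - p.1.1.1 + 2; ring)
      β hf₂ hHL₂
    -- transfer along the evident bijection of index sets
    let e : {x : (ℕ × ℕ) × ℕ × ℕ // x.2.1 ≤ x.1.1 ∧ x.2.2 ≤ x.1.2} ≃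
        {p : PDIdx1 × ℕ // (p.2 : ℤ) ≤ -(p.1.1.1.2 - p.1.1.1.1)} :=
      { toFun := fun t => ⟨(⟨((-(t.1.1.1 : ℤ), -(t.1.1.1 : ℤ) - t.1.1.2), t.1.2.1), by
            have h := t.2.1
            show ((t.1.2.1 : ℕ) : ℤ) ≤ -(-(t.1.1.1 : ℤ))
            omega⟩, t.1.2.2), by
            have h := t.2.2
            show ((t.1.2.2 : ℕ) : ℤ) ≤ -((-(t.1.1.1 : ℤ) - t.1.1.2) - (-(t.1.1.1 : ℤ)))
            omega⟩
        invFun := fun q => ⟨(((-(q.1.1.1.1.1)).toNat, (q.1.1.1.1.1 - q.1.1.1.1.2).toNat),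
            (q.1.1.1.2, q.1.2)), by
            have h1 : ((q.1.1.1.2 : ℕ) : ℤ) ≤ -(q.1.1.1.1.1) := q.1.1.2
            have h2 : ((q.1.2 : ℕ) : ℤ) ≤ -(q.1.1.1.1.2 - q.1.1.1.1.1) := q.2
            constructor <;> simp only [] <;> omega⟩
        left_inv := fun t => by
          obtain ⟨⟨⟨i, j⟩, ⟨a, b⟩⟩, ⟨h1, h2⟩⟩ := t
          apply Subtype.ext
          simp only [Prod.mk.injEq, and_true]
          exact ⟨by omega, by omega⟩
        right_inv := fun q => by
          obtain ⟨⟨⟨⟨⟨x1, x2⟩, a⟩, hq1⟩, b⟩, hq2⟩ := q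
          have h1 : (a : ℤ) ≤ -x1 := hq1
          have h2 : (b : ℤ) ≤ -(x2 - x1) := hq2
          apply Subtype.ext
          simp only [Prod.mk.injEq, and_true]
          apply Subtype.ext
          simp only [Prod.mk.injEq, and_true]
          exact ⟨by omega, by omega⟩ }
    apply isInternal_of_equiv _ _ e _ happ2
    rintro ⟨⟨⟨i, j⟩, ⟨a, b⟩⟩, ⟨ha, hb⟩⟩
    show ((Vg (-(i : ℤ), -(i : ℤ) - j) ⊓ LinearMap.ker (η ^ ((-(-(i : ℤ))).toNat + 1))).map (η ^ a)
        ⊓ LinearMap.ker (β ^ ((-((-(i : ℤ) - j) - (-(i : ℤ)))).toNat + 1))).map (β ^ b)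
        = (P i j).map (η ^ a * β ^ b)
    have hiN : (-(-(i : ℤ))).toNat = i := by omega
    have hjN : (-((-(i : ℤ) - j) - (-(i : ℤ)))).toNat = j := by omega
    rw [hiN, hjN, hP]
    have hK : (Vg (-(i : ℤ), -(i : ℤ) - j) ⊓ LinearMap.ker (η ^ (i + 1))).map (η ^ a)
        ⊓ LinearMap.ker (β ^ (j + 1))
        = (Vg (-(i : ℤ), -(i : ℤ) - j) ⊓ LinearMap.ker (η ^ (i + 1))
            ⊓ LinearMap.ker (β ^ (j + 1))).map (η ^ a) := by
      apply le_antisymm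
      · rintro v hv
        obtain ⟨hv1, hv2⟩ := Submodule.mem_inf.mp hv
        obtain ⟨u, hu, rfl⟩ := hv1
        have h1 : (η ^ a) ((β ^ (j + 1)) u) = 0 := by
          rw [← Module.End.mul_apply, (hcomm.pow_pow a (j + 1)).eq, Module.End.mul_apply]
          exact LinearMap.mem_ker.mp hv2
        have h2 : (β ^ (j + 1)) u ∈ Vg (-(i : ℤ), (-(i : ℤ) - j) + 2 * (j + 1 : ℕ)) :=
          hβmem (j + 1) _ _ u (Submodule.mem_inf.mp hu).1
        have h3 : (β ^ (j + 1)) u = 0 := hηinj a i ha _ _ h2 h1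
        exact ⟨u, Submodule.mem_inf.mpr ⟨hu, LinearMap.mem_ker.mpr h3⟩, rfl⟩
      · rintro v ⟨u, hu, rfl⟩
        obtain ⟨hu12, hu3⟩ := Submodule.mem_inf.mp hu
        refine Submodule.mem_inf.mpr ⟨⟨u, hu12, rfl⟩, ?_⟩
        have hc : (β ^ (j + 1)) ((η ^ a) u) = (η ^ a) ((β ^ (j + 1)) u) := by
          rw [← Module.End.mul_apply, ← (hcomm.pow_pow a (j + 1)).eq, Module.End.mul_apply]
        rw [LinearMap.mem_ker, hc, LinearMap.mem_ker.mp hu3, map_zero]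
    rw [hK, ← Submodule.map_comp, ← Module.End.mul_eq_comp, (hcomm.pow_pow a b).eq]
end

section
/- (Hard Lefschetz in degrees ≥ 2 via weak Lefschetz.) Under the stated weak Lefschetz hypotheses, assume additionally that e' := r∘g satisfies hard Lefschetz on H', i.e. e'^i : H'^{-i} → H'^i is bijective for all i ≥ 0. Then for every k ≥ 2 the map e^k : H^{-k} → H^k is bijective, where e := g∘r. (Indeed e^k factors as the composition H^{-k} →r H'^{-k+1} →e'^{k−1} H'^{k−1} →g H^k of three bijections.) -/
private lemma pow_comp_aux {H H' : Type*} [AddCommGroup H] [Module ℝ H]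
    [AddCommGroup H'] [Module ℝ H']
    (r : H →ₗ[ℝ] H') (g : H' →ₗ[ℝ] H) (n : ℕ) :
    ((g ∘ₗ r : Module.End ℝ H) ^ (n + 1)) =
      g ∘ₗ ((r ∘ₗ g : Module.End ℝ H') ^ n) ∘ₗ r := by
  induction n with
  | zero => ext x; simp
  | succ n ih =>
      rw [pow_succ, Module.End.mul_eq_comp, ih, pow_succ, Module.End.mul_eq_comp]
      ext x; simp

/-- **Hard Lefschetz in degrees ≥ 2 via weak Lefschetz.**

Let `H`, `H'` be finite-dimensional ℤ-graded real vector spaces, `r : H → H'`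
and `g : H' → H` linear maps of degree `1` satisfying the weak Lefschetz
conditions, and set `e = g ∘ r`, `e' = r ∘ g`.  If `e'` satisfies hard
Lefschetz on `H'`, then for every `k ≥ 2` the map `e^k : H^{-k} → H^k`
is bijective. -/
theorem hard_lefschetz_high_degrees_via_weak_lefschetz
    (H H' : Type*) [AddCommGroup H] [Module ℝ H] [FiniteDimensional ℝ H]
    [AddCommGroup H'] [Module ℝ H'] [FiniteDimensional ℝ H']
    (Hg : ℤ → Submodule ℝ H) (Hg' : ℤ → Submodule ℝ H')
    (hgrading : DirectSum.IsInternal Hg) (hgrading' : DirectSum.IsInternal Hg')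
    (r : H →ₗ[ℝ] H') (g : H' →ₗ[ℝ] H)
    (hr : ∀ j : ℤ, (Hg j).map r ≤ Hg' (j + 1))
    (hg : ∀ j : ℤ, (Hg' j).map g ≤ Hg (j + 1))
    (hWLr : ∀ j : ℤ, j < -1 →
      (Hg j).map r = Hg' (j + 1) ∧ ∀ v ∈ Hg j, r v = 0 → v = 0)
    (hWLr' : ∀ v ∈ Hg (-1), r v = 0 → v = 0)
    (hWLg : ∀ j : ℤ, 1 < j →
      (Hg' (j - 1)).map g = Hg j ∧ ∀ v ∈ Hg' (j - 1), g v = 0 → v = 0)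
    (hWLg' : (Hg' 0).map g = Hg 1)
    (hHL' : ∀ i : ℕ,
      (Hg' (-(i : ℤ))).map ((r ∘ₗ g : Module.End ℝ H') ^ i) = Hg' (i : ℤ) ∧
      ∀ v ∈ Hg' (-(i : ℤ)), ((r ∘ₗ g : Module.End ℝ H') ^ i) v = 0 → v = 0) :
    ∀ k : ℕ, 2 ≤ k →
      (Hg (-(k : ℤ))).map ((g ∘ₗ r : Module.End ℝ H) ^ k) = Hg (k : ℤ) ∧
      ∀ v ∈ Hg (-(k : ℤ)), ((g ∘ₗ r : Module.End ℝ H) ^ k) v = 0 → v = 0 := by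
  intro k hk
  obtain ⟨i, rfl⟩ : ∃ i, k = i + 1 := ⟨k - 1, by omega⟩
  have hi : 1 ≤ i := by omega
  -- degree bookkeeping
  have h1 : (-((i + 1 : ℕ) : ℤ)) + 1 = -(i : ℤ) := by push_cast; ring
  have h2 : ((i + 1 : ℕ) : ℤ) - 1 = (i : ℤ) := by push_cast; ring
  have hlt : (-((i + 1 : ℕ) : ℤ)) < -1 := by push_cast; omega
  have hgt : (1 : ℤ) < ((i + 1 : ℕ) : ℤ) := by push_cast; omega
  have hrbij := hWLr _ hlt
  have hHL := hHL' i
  have hgbij := hWLg _ hgt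
  rw [h1] at hrbij
  rw [h2] at hgbij
  have hcomp := pow_comp_aux r g i
  constructor
  · rw [hcomp, ← LinearMap.comp_assoc, Submodule.map_comp, Submodule.map_comp,
      hrbij.1, hHL.1, hgbij.1]
  · intro v hv hv0
    rw [hcomp] at hv0
    have hrv : r v ∈ Hg' (-(i : ℤ)) := hrbij.1 ▸ Submodule.mem_map_of_mem hv
    have hev : ((r ∘ₗ g : Module.End ℝ H') ^ i) (r v) ∈ Hg' (i : ℤ) :=
      hHL.1 ▸ Submodule.mem_map_of_mem hrv
    have h3 : ((r ∘ₗ g : Module.End ℝ H') ^ i) (r v) = 0 :=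
      hgbij.2 _ hev hv0
    have h4 : r v = 0 := hHL.2 _ hrv h3
    exact hrbij.2 v hv h4
end

section
/- (Middle hard Lefschetz from anisotropy on restricted primitives.) Under the stated weak Lefschetz hypotheses, suppose given a bilinear form B : H^{-1} × H^1 → ℝ and a bilinear form B' : H'^0 × H'^0 → ℝ such that B'(r(α), r(β)) = B(α, e(β)) for all α, β ∈ H^{-1}, and such that B'(γ, γ) ≠ 0 for every nonzero γ ∈ r(P^{-1}), where P^{-1} := {α ∈ H^{-1} | e²(α) = 0}. Then e : H^{-1} → H^1 is injective; if moreover dim H^{-1} = dim H^1, then e : H^{-1} → H^1 is bijective. -/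
open Module

/-- **Middle hard Lefschetz from anisotropy on restricted primitives.**

Under the weak Lefschetz hypotheses for degree-`1` maps `r : H → H'` and
`g : H' → H`, with `e = g ∘ r`, suppose given bilinear forms `B` (pairing
`H^{-1}` with `H^1`) and `B'` (on `H'^0`) with `B'(rα, rβ) = B(α, eβ)` for
all `α, β ∈ H^{-1}`, such that `B'` is anisotropic on `r(P^{-1})`, where
`P^{-1} = {α ∈ H^{-1} | e² α = 0}`.  Then `e : H^{-1} → H^1` is injective;
and if moreover `dim H^{-1} = dim H^1` then `e : H^{-1} → H^1` is bijective. -/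
theorem middle_hard_lefschetz_of_anisotropy
    (H H' : Type*) [AddCommGroup H] [Module ℝ H] [FiniteDimensional ℝ H]
    [AddCommGroup H'] [Module ℝ H'] [FiniteDimensional ℝ H']
    (Hg : ℤ → Submodule ℝ H) (Hg' : ℤ → Submodule ℝ H')
    (hgrading : DirectSum.IsInternal Hg) (hgrading' : DirectSum.IsInternal Hg')
    (r : H →ₗ[ℝ] H') (g : H' →ₗ[ℝ] H)
    (hr : ∀ j : ℤ, (Hg j).map r ≤ Hg' (j + 1))
    (hg : ∀ j : ℤ, (Hg' j).map g ≤ Hg (j + 1))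
    (hWLr : ∀ j : ℤ, j < -1 →
      (Hg j).map r = Hg' (j + 1) ∧ ∀ v ∈ Hg j, r v = 0 → v = 0)
    (hWLr' : ∀ v ∈ Hg (-1), r v = 0 → v = 0)
    (hWLg : ∀ j : ℤ, 1 < j →
      (Hg' (j - 1)).map g = Hg j ∧ ∀ v ∈ Hg' (j - 1), g v = 0 → v = 0)
    (hWLg' : (Hg' 0).map g = Hg 1)
    (B : H →ₗ[ℝ] H →ₗ[ℝ] ℝ) (B' : H' →ₗ[ℝ] H' →ₗ[ℝ] ℝ)
    (hBB' : ∀ α ∈ Hg (-1), ∀ β ∈ Hg (-1), B' (r α) (r β) = B α ((g ∘ₗ r) β))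
    (haniso : ∀ γ ∈ (Hg (-1) ⊓ LinearMap.ker ((g ∘ₗ r : Module.End ℝ H) ^ 2)).map r,
      γ ≠ 0 → B' γ γ ≠ 0) :
    (∀ v ∈ Hg (-1), (g ∘ₗ r) v = 0 → v = 0) ∧
    (finrank ℝ (Hg (-1)) = finrank ℝ (Hg 1) →
      (Hg (-1)).map (g ∘ₗ r) = Hg 1) := by
  set e : H →ₗ[ℝ] H := g ∘ₗ r with he
  have hinj : ∀ v ∈ Hg (-1), e v = 0 → v = 0 := by
    intro v hv hev
    have hv2 : v ∈ Hg (-1) ⊓ LinearMap.ker ((g ∘ₗ r : Module.End ℝ H) ^ 2) := by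
      refine ⟨hv, ?_⟩
      have h0 : (g ∘ₗ r) ((g ∘ₗ r) v) = 0 := by rw [show (g ∘ₗ r) v = 0 from hev]; simp
      simpa [pow_two, LinearMap.mem_ker, Module.End.mul_apply] using h0
    have hrv : r v ∈ (Hg (-1) ⊓ LinearMap.ker ((g ∘ₗ r : Module.End ℝ H) ^ 2)).map r :=
      ⟨v, hv2, rfl⟩
    have hB : B' (r v) (r v) = 0 := by
      rw [hBB' v hv v hv, hev, map_zero]
    by_contra hvne
    have hrvne : r v ≠ 0 := fun h => hvne (hWLr' v hv h)
    exact haniso (r v) hrv hrvne hB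
  refine ⟨hinj, ?_⟩
  intro hdim
  have hle : (Hg (-1)).map e ≤ Hg 1 := by
    intro x hx
    obtain ⟨v, hv, rfl⟩ := hx
    have : r v ∈ Hg' 0 := hr (-1) ⟨v, hv, rfl⟩
    exact hg 0 ⟨r v, this, rfl⟩
  have hfin : finrank ℝ ((Hg (-1)).map e) = finrank ℝ (Hg (-1)) := by
    let f : Hg (-1) →ₗ[ℝ] H := e.comp (Hg (-1)).subtype
    have hrange : LinearMap.range f = (Hg (-1)).map e := by
      ext x
      simp [f, LinearMap.mem_range, Submodule.mem_map]
    have hfi : Function.Injective f := by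
      rw [← LinearMap.ker_eq_bot, LinearMap.ker_eq_bot']
      intro ⟨v, hv⟩ h
      exact Subtype.ext (hinj v hv (by simpa [f] using h))
    rw [← hrange]
    exact LinearMap.finrank_range_of_inj hfi
  exact Submodule.eq_of_le_of_finrank_le hle (by rw [hfin, hdim])
end

section
/- (Rank of the composition pairing computes the multiplicity of a simple summand.) Let k, C, S and the composition pairing be as in the context. Let X be an object of C admitting a direct sum decomposition X ≅ S^{⊕d} ⊕ F for some integer d ≥ 0 and some object F which has no direct summand isomorphic to S. Then the composition pairing Hom(S,X) × Hom(X,S) → End(S) ≅ k has rank exactly d. -/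
open CategoryTheory CategoryTheory.Limits Module

attribute [local instance] CategoryTheory.Abelian.hasFiniteBiproducts

/-- **Rank of the composition pairing computes the multiplicity of a simple
summand.**

Let `C` be a `k`-linear abelian category with finite-dimensional Hom-spaces,
`S` a simple object with `End(S) = k·𝟙`, and `c : End(S) → k` the linear
functional with `c(𝟙) = 1`.  Let `p` be the composition pairing
`Hom(S,X) × Hom(X,S) → End(S)`, `(φ, ψ) ↦ φ ≫ ψ`.  If `X ≅ S^{⊕d} ⊕ F`
where `F` has no direct summand isomorphic to `S`, then the rank of the
pairing — that is, the rank of the induced map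
`Hom(S,X) → Hom_k(Hom(X,S), k)` — is exactly `d`. -/
theorem rank_composition_pairing_eq_multiplicity
    (k : Type*) [Field k]
    (C : Type*) [Category C] [Abelian C] [Linear k C]
    [∀ X Y : C, FiniteDimensional k (X ⟶ Y)]
    (S : C) [Simple S]
    (hEnd : ∀ f : S ⟶ S, ∃ a : k, f = a • 𝟙 S)
    (c : (S ⟶ S) →ₗ[k] k) (hc : c (𝟙 S) = 1)
    (X : C)
    (p : (S ⟶ X) →ₗ[k] (X ⟶ S) →ₗ[k] (S ⟶ S))
    (hp : ∀ (φ : S ⟶ X) (ψ : X ⟶ S), p φ ψ = φ ≫ ψ)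
    (d : ℕ) (F : C)
    (hF : ∀ G : C, IsEmpty (F ≅ S ⊞ G))
    (hX : Nonempty (X ≅ (⨁ fun _ : Fin d => S) ⊞ F)) :
    finrank k
      (LinearMap.range ((LinearMap.llcomp k (X ⟶ S) (S ⟶ S) k c).comp p)) = d := by
  obtain ⟨e⟩ := hX
  set T : (S ⟶ X) →ₗ[k] (X ⟶ S) →ₗ[k] k :=
    (LinearMap.llcomp k (X ⟶ S) (S ⟶ S) k c).comp p with hT
  have hTapp : ∀ (φ : S ⟶ X) (ψ : X ⟶ S), T φ ψ = c (φ ≫ ψ) := by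
    intro φ ψ
    simp [hT, hp]
  -- every endomorphism of S is recovered by c
  have scal : ∀ f : S ⟶ S, f = c f • 𝟙 S := by
    intro f
    obtain ⟨a, ha⟩ := hEnd f
    rw [ha, map_smul, smul_eq_mul, hc, mul_one]
  -- key: any composition S ⟶ F ⟶ S vanishes
  have key : ∀ (α : S ⟶ F) (β : F ⟶ S), α ≫ β = 0 := by
    intro α β
    obtain ⟨a, ha⟩ := hEnd (α ≫ β)
    by_cases h0 : a = 0
    · rw [ha, h0, zero_smul]
    · exfalso
      have hsm : α ≫ (a⁻¹ • β) = 𝟙 S := by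
        rw [Linear.comp_smul, ha, smul_smul, inv_mul_cancel₀ h0, one_smul]
      letI : IsSplitMono α := IsSplitMono.mk' ⟨a⁻¹ • β, hsm⟩
      exact (hF (cokernel α)).false <| biprod.uniqueUpToIso S (cokernel α)
        (isBilimitBinaryBiconeOfIsSplitMonoOfCokernel (cokernelIsCokernel α))
  -- the distinguished morphisms
  set φ : Fin d → (S ⟶ X) :=
    fun i => biproduct.ι (fun _ : Fin d => S) i ≫ biprod.inl ≫ e.inv with hφ
  set ψ : Fin d → (X ⟶ S) :=
    fun j => e.hom ≫ biprod.fst ≫ biproduct.π (fun _ : Fin d => S) j with hψ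
  have hcomp : ∀ i j, φ i ≫ ψ j = if i = j then 𝟙 S else 0 := by
    intro i j
    by_cases h : i = j
    · subst h
      simp [hφ, hψ]
    · simp [hφ, hψ, biproduct.ι_π, h]
  have hTφψ : ∀ i j, T (φ i) (ψ j) = if i = j then 1 else 0 := by
    intro i j
    rw [hTapp, hcomp]
    by_cases h : i = j <;> simp [h, hc]
  -- upper bound
  set L : (S ⟶ X) →ₗ[k] (Fin d → k) := LinearMap.pi fun i => T.flip (ψ i) with hL
  have hker : LinearMap.ker L ≤ LinearMap.ker T := by
    intro f hf
    have hfψ : ∀ i, f ≫ ψ i = 0 := by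
      intro i
      have := congrFun (LinearMap.mem_ker.mp hf) i
      simp only [hL, LinearMap.pi_apply, LinearMap.flip_apply, Pi.zero_apply] at this
      rw [hTapp] at this
      rw [scal (f ≫ ψ i), this, zero_smul]
    have hfst : f ≫ e.hom ≫ biprod.fst = 0 := by
      apply biproduct.hom_ext
      intro j
      have := hfψ j
      simp only [hψ] at this
      simpa using this
    rw [LinearMap.mem_ker]
    ext g
    have hdec : f ≫ g
        = (f ≫ e.hom ≫ biprod.snd) ≫ biprod.inr ≫ e.inv ≫ g := by
      have : f ≫ g = f ≫ e.hom ≫ (𝟙 _) ≫ e.inv ≫ g := by simp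
      rw [← biprod.total] at this
      rw [this]
      simp only [Preadditive.comp_add, Preadditive.add_comp, Category.assoc]
      rw [reassoc_of% hfst]
      simp
    have : f ≫ g = 0 := by
      rw [hdec]
      exact key _ _
    simp [hTapp, this]
  have hupper : finrank k (LinearMap.range T) ≤ d := by
    have h1 := LinearMap.finrank_range_add_finrank_ker T
    have h2 := LinearMap.finrank_range_add_finrank_ker L
    have h3 : finrank k (LinearMap.ker L) ≤ finrank k (LinearMap.ker T) :=
      Submodule.finrank_mono hker
    have h4 : finrank k (LinearMap.range L) ≤ finrank k (Fin d → k) :=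
      (LinearMap.range L).finrank_le
    rw [Module.finrank_fintype_fun_eq_card, Fintype.card_fin] at h4
    omega
  -- lower bound
  have hli : LinearIndependent k (fun i => T (φ i)) := by
    rw [Fintype.linearIndependent_iff]
    intro g hg j
    have := congrFun (congrArg (DFunLike.coe) hg) (ψ j)
    simp only [LinearMap.coe_sum, Finset.sum_apply, LinearMap.smul_apply,
      LinearMap.zero_apply, smul_eq_mul] at this
    rw [Finset.sum_congr rfl (fun i _ => by rw [hTφψ i j])] at this
    simpa using this
  have hlower : d ≤ finrank k (LinearMap.range T) := by
    have hspan : Submodule.span k (Set.range fun i => T (φ i)) ≤ LinearMap.range T := by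
      rw [Submodule.span_le]
      rintro _ ⟨i, rfl⟩
      exact ⟨φ i, rfl⟩
    have := Submodule.finrank_mono hspan
    rwa [finrank_span_eq_card hli, Fintype.card_fin] at this
  exact le_antisymm hupper hlower
end

section
/- (Nondegenerate composition pairing yields a splitting.) Let k, C, S and the composition pairing be as in the context, and let X be an object of C. Suppose the composition pairing Hom(S,X) × Hom(X,S) → End(S) ≅ k is nondegenerate, i.e. the induced linear maps Hom(S,X) → Hom_k(Hom(X,S), k) and Hom(X,S) → Hom_k(Hom(S,X), k) are injective. Then, with d := dim_k Hom(S,X) = dim_k Hom(X,S), there is a direct sum decomposition X ≅ S^{⊕d} ⊕ F for some object F with Hom(S,F) = 0 and Hom(F,S) = 0. -/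
open CategoryTheory CategoryTheory.Limits Module

attribute [local instance] CategoryTheory.Abelian.hasFiniteBiproducts

/-- **Nondegenerate composition pairing yields a splitting.**

Let `C` be a `k`-linear abelian category with finite-dimensional Hom-spaces,
`S` a simple object with `End(S) = k·𝟙`, and `c : End(S) → k` the linear
functional with `c(𝟙) = 1`.  Let `p` be the composition pairing
`Hom(S,X) × Hom(X,S) → End(S)`, `(φ, ψ) ↦ φ ≫ ψ`.  If the pairing is
nondegenerate, i.e. both induced maps `Hom(S,X) → Hom_k(Hom(X,S), k)` and
`Hom(X,S) → Hom_k(Hom(S,X), k)` are injective, then with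
`d = dim Hom(S,X) = dim Hom(X,S)` there is a decomposition `X ≅ S^{⊕d} ⊕ F`
with `Hom(S,F) = 0` and `Hom(F,S) = 0`. -/
theorem splitting_of_nondegenerate_composition_pairing
    (k : Type*) [Field k]
    (C : Type*) [Category C] [Abelian C] [Linear k C]
    [∀ X Y : C, FiniteDimensional k (X ⟶ Y)]
    (S : C) [Simple S]
    (hEnd : ∀ f : S ⟶ S, ∃ a : k, f = a • 𝟙 S)
    (c : (S ⟶ S) →ₗ[k] k) (hc : c (𝟙 S) = 1)
    (X : C)
    (p : (S ⟶ X) →ₗ[k] (X ⟶ S) →ₗ[k] (S ⟶ S))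
    (hp : ∀ (φ : S ⟶ X) (ψ : X ⟶ S), p φ ψ = φ ≫ ψ)
    (hinj₁ : Function.Injective ((LinearMap.llcomp k (X ⟶ S) (S ⟶ S) k c).comp p))
    (hinj₂ : Function.Injective
      ((LinearMap.llcomp k (S ⟶ X) (S ⟶ S) k c).comp p.flip)) :
    finrank k (S ⟶ X) = finrank k (X ⟶ S) ∧
    ∃ F : C,
      Nonempty (X ≅ (⨁ fun _ : Fin (finrank k (S ⟶ X)) => S) ⊞ F) ∧
      (∀ φ : S ⟶ F, φ = 0) ∧ (∀ ψ : F ⟶ S, ψ = 0) := by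
  classical
  have hcid : ∀ f : S ⟶ S, f = c f • 𝟙 S := by
    intro f
    obtain ⟨a, ha⟩ := hEnd f
    rw [ha, map_smul, hc, smul_eq_mul, mul_one]
  set B₁ := ((LinearMap.llcomp k (X ⟶ S) (S ⟶ S) k c).comp p) with hB₁
  set B₂ := ((LinearMap.llcomp k (S ⟶ X) (S ⟶ S) k c).comp p.flip) with hB₂
  have hB₁app : ∀ (φ : S ⟶ X) (ψ : X ⟶ S), B₁ φ ψ = c (φ ≫ ψ) := by
    intro φ ψ; simp [hB₁, LinearMap.llcomp, hp]
  have hB₂app : ∀ (ψ : X ⟶ S) (φ : S ⟶ X), B₂ ψ φ = c (φ ≫ ψ) := by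
    intro ψ φ; simp [hB₂, LinearMap.llcomp, hp]
  have hfin : finrank k (S ⟶ X) = finrank k (X ⟶ S) := by
    apply le_antisymm
    · calc finrank k (S ⟶ X) ≤ finrank k (Module.Dual k (X ⟶ S)) :=
            LinearMap.finrank_le_finrank_of_injective hinj₁
        _ = finrank k (X ⟶ S) := Subspace.dual_finrank_eq
    · calc finrank k (X ⟶ S) ≤ finrank k (Module.Dual k (S ⟶ X)) :=
            LinearMap.finrank_le_finrank_of_injective hinj₂
        _ = finrank k (S ⟶ X) := Subspace.dual_finrank_eq
  refine ⟨hfin, ?_⟩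
  set d := finrank k (S ⟶ X) with hd
  -- a basis of Hom(X,S)
  have hrk : finrank k (X ⟶ S) = d := hfin.symm
  set ψb : Basis (Fin d) k (X ⟶ S) := finBasisOfFinrankEq k (X ⟶ S) hrk with hψb
  -- B₁ as a linear equivalence onto the dual
  have hdual : finrank k (S ⟶ X) = finrank k (Module.Dual k (X ⟶ S)) := by
    rw [Subspace.dual_finrank_eq]; exact hfin
  set e := LinearMap.linearEquivOfInjective B₁ hinj₁ hdual with he
  set φb : Basis (Fin d) k (S ⟶ X) := ψb.dualBasis.map e.symm with hφb
  have hpair : ∀ i j, (φb i) ≫ (ψb j) = if j = i then 𝟙 S else 0 := by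
    intro i j
    have h1 : B₁ (φb i) (ψb j) = if j = i then (1 : k) else 0 := by
      have h0 : B₁ (φb i) = ψb.dualBasis i := by
        rw [hφb, Basis.map_apply]
        exact e.apply_symm_apply _
      rw [h0, ψb.dualBasis_apply_self]
    have h2 := hcid ((φb i) ≫ (ψb j))
    rw [← hB₁app, h1] at h2
    rw [h2]
    by_cases h : j = i <;> simp [h]
  -- the biproduct of d copies of S
  set B : C := ⨁ fun _ : Fin d => S with hB
  set α : B ⟶ X := biproduct.desc (fun i => φb i) with hα
  set β : X ⟶ B := biproduct.lift (fun j => ψb j) with hβ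
  have hαβ : α ≫ β = 𝟙 B := by
    apply biproduct.hom_ext
    intro j
    apply biproduct.hom_ext'
    intro i
    simp only [hα, hβ, Category.assoc, biproduct.lift_π, biproduct.ι_desc_assoc,
      Category.id_comp, biproduct.ι_π, hpair i j]
    by_cases h : j = i
    · subst h; simp
    · simp [h, Ne.symm h]
  -- F is the kernel of β
  set F : C := kernel β with hF
  set ι : F ⟶ X := kernel.ι β with hι
  have hρ0 : (𝟙 X - β ≫ α) ≫ β = 0 := by
    simp [Preadditive.sub_comp, Category.assoc, hαβ]
  set ρ : X ⟶ F := kernel.lift β (𝟙 X - β ≫ α) hρ0 with hρ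
  have hριc : ρ ≫ ι = 𝟙 X - β ≫ α := kernel.lift_ι _ _ _
  have hιβ : ι ≫ β = 0 := kernel.condition β
  have hαρ : α ≫ ρ = 0 := by
    have : (α ≫ ρ) ≫ ι = 0 ≫ ι := by
      rw [Category.assoc, hριc, zero_comp, Preadditive.comp_sub, Category.comp_id,
        ← Category.assoc, hαβ, Category.id_comp, sub_self]
    exact (cancel_mono ι).mp this
  have hιρ : ι ≫ ρ = 𝟙 F := by
    have : (ι ≫ ρ) ≫ ι = 𝟙 F ≫ ι := by
      rw [Category.assoc, hριc, Category.id_comp, Preadditive.comp_sub, Category.comp_id,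
        ← Category.assoc, hιβ, zero_comp, sub_zero]
    exact (cancel_mono ι).mp this
  refine ⟨F, ⟨?_⟩, ?_, ?_⟩
  · -- the isomorphism X ≅ B ⊞ F
    refine ⟨biprod.lift β ρ, biprod.desc α ι, ?_, ?_⟩
    · rw [biprod.lift_desc, hριc]
      abel
    · apply biprod.hom_ext' <;> apply biprod.hom_ext <;>
        simp [hαβ, hαρ, hιβ, hιρ]
  · -- Hom(S, F) = 0
    intro φ
    have key : B₁ (φ ≫ ι) = 0 := by
      apply ψb.ext
      intro j
      have : (φ ≫ ι) ≫ ψb j = 0 := by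
        have hψj : ψb j = β ≫ biproduct.π _ j := by simp [hβ]
        rw [hψj, Category.assoc, ← Category.assoc ι, hιβ, zero_comp, comp_zero]
      rw [hB₁app, this, LinearMap.zero_apply, map_zero]
    have : φ ≫ ι = 0 := hinj₁ (by rw [key, map_zero])
    exact zero_of_comp_mono ι this
  · -- Hom(F, S) = 0
    intro ψ
    have key : B₂ (ρ ≫ ψ) = 0 := by
      apply φb.ext
      intro i
      have hφι : φb i = biproduct.ι _ i ≫ α := by simp [hα]
      have : (φb i) ≫ ρ ≫ ψ = 0 := by
        rw [hφι, Category.assoc, ← Category.assoc α, hαρ, zero_comp, comp_zero]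
      rw [hB₂app, ← Category.assoc, Category.assoc, this, LinearMap.zero_apply, map_zero]
    have hρψ : ρ ≫ ψ = 0 := hinj₂ (by rw [key, map_zero])
    calc ψ = (ι ≫ ρ) ≫ ψ := by rw [hιρ, Category.id_comp]
      _ = ι ≫ (ρ ≫ ψ) := Category.assoc _ _ _
      _ = 0 := by rw [hρψ, comp_zero]
end
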